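/- Let G be a connected simple graph with n ≥ 3 vertices. Then (1536/343) · X(G) ≤ AZI(G) ≤ (√((n−1)¹³)/(√32 · (n−2)³)) · X(G), with equality on the left if and only if G is isomorphic to the star K_{1,8}, and equality on the right if and only if G is isomorphic to the complete graph Kₙ. -/

import Mathlib

open Finset SimpleGraph

variable {V : Type*} [Fintype V] [DecidableEq V]

/-- The sum-connectivity index `X(G) = Σ_{uv ∈ E(G)} 1/√(d_u + d_v)`. -/
noncomputable def sumConnIndex (G : SimpleGraph V) [DecidableRel G.Adj] : ℝ :=
  ∑ e ∈ G.edgeFinset, Sym2.lift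
    ⟨fun u v => 1 / Real.sqrt ((G.degree u : ℝ) + (G.degree v : ℝ)),
     fun u v => by dsimp only; rw [add_comm ((G.degree u : ℝ)) ((G.degree v : ℝ))]⟩ e

/-- The Randić index `R(G) = Σ_{uv ∈ E(G)} 1/√(d_u d_v)`. -/
noncomputable def randicIndex (G : SimpleGraph V) [DecidableRel G.Adj] : ℝ :=
  ∑ e ∈ G.edgeFinset, Sym2.lift
    ⟨fun u v => 1 / Real.sqrt ((G.degree u : ℝ) * (G.degree v : ℝ)),
     fun u v => by dsimp only; rw [mul_comm ((G.degree u : ℝ)) ((G.degree v : ℝ))]⟩ e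

/-- The harmonic index `H(G) = Σ_{uv ∈ E(G)} 2/(d_u + d_v)`. -/
noncomputable def harmonicIndex (G : SimpleGraph V) [DecidableRel G.Adj] : ℝ :=
  ∑ e ∈ G.edgeFinset, Sym2.lift
    ⟨fun u v => 2 / ((G.degree u : ℝ) + (G.degree v : ℝ)),
     fun u v => by dsimp only; rw [add_comm ((G.degree u : ℝ)) ((G.degree v : ℝ))]⟩ e

/-- The atom-bond connectivity index `ABC(G) = Σ_{uv ∈ E(G)} √((d_u + d_v − 2)/(d_u d_v))`. -/
noncomputable def abcIndex (G : SimpleGraph V) [DecidableRel G.Adj] : ℝ :=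
  ∑ e ∈ G.edgeFinset, Sym2.lift
    ⟨fun u v => Real.sqrt (((G.degree u : ℝ) + (G.degree v : ℝ) - 2) /
        ((G.degree u : ℝ) * (G.degree v : ℝ))),
     fun u v => by dsimp only; rw [add_comm ((G.degree u : ℝ)) ((G.degree v : ℝ)),
        mul_comm ((G.degree u : ℝ)) ((G.degree v : ℝ))]⟩ e

/-- The first geometric-arithmetic index `GA(G) = Σ_{uv ∈ E(G)} 2√(d_u d_v)/(d_u + d_v)`. -/
noncomputable def geoArithIndex (G : SimpleGraph V) [DecidableRel G.Adj] : ℝ :=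
  ∑ e ∈ G.edgeFinset, Sym2.lift
    ⟨fun u v => 2 * Real.sqrt ((G.degree u : ℝ) * (G.degree v : ℝ)) /
        ((G.degree u : ℝ) + (G.degree v : ℝ)),
     fun u v => by dsimp only; rw [mul_comm ((G.degree u : ℝ)) ((G.degree v : ℝ)),
        add_comm ((G.degree u : ℝ)) ((G.degree v : ℝ))]⟩ e

/-- The augmented Zagreb index `AZI(G) = Σ_{uv ∈ E(G)} (d_u d_v/(d_u + d_v − 2))³`. -/
noncomputable def augZagrebIndex (G : SimpleGraph V) [DecidableRel G.Adj] : ℝ :=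
  ∑ e ∈ G.edgeFinset, Sym2.lift
    ⟨fun u v => ((G.degree u : ℝ) * (G.degree v : ℝ) /
        ((G.degree u : ℝ) + (G.degree v : ℝ) - 2)) ^ 3,
     fun u v => by dsimp only; rw [mul_comm ((G.degree u : ℝ)) ((G.degree v : ℝ)),
        add_comm ((G.degree u : ℝ)) ((G.degree v : ℝ))]⟩ e

/-- The modified second Zagreb index `M₂*(G) = Σ_{uv ∈ E(G)} 1/(d_u d_v)`. -/
noncomputable def modSecondZagrebIndex (G : SimpleGraph V) [DecidableRel G.Adj] : ℝ :=
  ∑ e ∈ G.edgeFinset, Sym2.lift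
    ⟨fun u v => 1 / ((G.degree u : ℝ) * (G.degree v : ℝ)),
     fun u v => by dsimp only; rw [mul_comm ((G.degree u : ℝ)) ((G.degree v : ℝ))]⟩ e


section AuxArith

lemma aux_natA1 (b : ℕ) (hb : 2 ≤ b) :
    2359296*(b-1)^6 ≤ 117649*b^6*(b+1) ∧
    (2359296*(b-1)^6 = 117649*b^6*(b+1) ↔ b = 8) := by
  rcases lt_or_ge b 21 with h | h
  · interval_cases b <;> norm_num
  · have h1 : (b-1)^6 < b^6 := Nat.pow_lt_pow_left (by omega) (by norm_num)
    have h0 : 0 < b^6 := Nat.pow_pos (by omega)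
    have h2 : 2359296*b^6 < 117649*b^6*(b+1) := by
      have : 2359296 < 117649*(b+1) := by omega
      calc 2359296*b^6 < (117649*(b+1))*b^6 := (Nat.mul_lt_mul_right h0).mpr this
        _ = 117649*b^6*(b+1) := by ring
    have h3 : 2359296*(b-1)^6 < 117649*b^6*(b+1) :=
      lt_of_le_of_lt (Nat.mul_le_mul_left _ h1.le) h2
    exact ⟨h3.le, ⟨fun he => absurd he h3.ne, fun h8 => by omega⟩⟩

lemma aux_natA (a b : ℕ) (ha : 1 ≤ a) (hb : 1 ≤ b) (hab : 3 ≤ a+b) :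
    2359296*(a+b-2)^6 ≤ 117649*(a*b)^6*(a+b) ∧
    (2359296*(a+b-2)^6 = 117649*(a*b)^6*(a+b) ↔ (a = 1 ∧ b = 8) ∨ (a = 8 ∧ b = 1)) := by
  rcases eq_or_lt_of_le ha with h1 | h1'
  · obtain rfl : a = 1 := h1.symm
    have hb2 : 2 ≤ b := by omega
    have := aux_natA1 b hb2
    have e1 : 1 + b - 2 = b - 1 := by omega
    have e2 : (1*b) = b := by ring
    have e3 : 1 + b = b + 1 := by ring
    rw [e1, e2, e3]
    refine ⟨this.1, this.2.trans ?_⟩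
    constructor
    · intro h8; exact Or.inl ⟨rfl, h8⟩
    · rintro (⟨-, h8⟩ | ⟨h8, -⟩) <;> omega
  · rcases eq_or_lt_of_le hb with h2 | h2'
    · obtain rfl : b = 1 := h2.symm
      have ha2 : 2 ≤ a := by omega
      have := aux_natA1 a ha2
      have e1 : a + 1 - 2 = a - 1 := by omega
      have e2 : (a*1) = a := by ring
      rw [e1, e2]
      refine ⟨this.1, this.2.trans ?_⟩
      constructor
      · intro h8; exact Or.inr ⟨h8, rfl⟩
      · rintro (⟨-, h8⟩ | ⟨h8, -⟩) <;> omega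
    · obtain ⟨a', rfl⟩ : ∃ a', a = a' + 2 := ⟨a - 2, by omega⟩
      obtain ⟨b', rfl⟩ : ∃ b', b = b' + 2 := ⟨b - 2, by omega⟩
      have e1 : a' + 2 + (b' + 2) - 2 = a' + b' + 2 := by omega
      rw [e1]
      have k1 : 2*(a'+b'+2) ≤ (a'+2)*(b'+2) := by nlinarith
      have k2 : (2*(a'+b'+2))^6 ≤ ((a'+2)*(b'+2))^6 := Nat.pow_le_pow_left k1 6
      have k3 : 64*(a'+b'+2)^6 ≤ ((a'+2)*(b'+2))^6 := by
        calc 64*(a'+b'+2)^6 = (2*(a'+b'+2))^6 := by ring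
          _ ≤ _ := k2
      have k0 : 0 < (a'+b'+2)^6 := Nat.pow_pos (by omega)
      have hstrict : 2359296*(a'+b'+2)^6 < 117649*((a'+2)*(b'+2))^6*(a'+2+(b'+2)) := by
        calc 2359296*(a'+b'+2)^6 < 30118144*(a'+b'+2)^6 := by
              exact (Nat.mul_lt_mul_right k0).mpr (by norm_num)
          _ = 117649*(64*(a'+b'+2)^6)*4 := by ring
          _ ≤ 117649*((a'+2)*(b'+2))^6*(a'+2+(b'+2)) := by
              exact Nat.mul_le_mul (Nat.mul_le_mul_left _ k3) (by omega)
      exact ⟨hstrict.le, ⟨fun he => absurd he hstrict.ne, fun hc => by omega⟩⟩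

lemma aux_key1 (m a b : ℕ) (hm : 2 ≤ m) (ha : 1 ≤ a) (ham : a ≤ m) (hb : 1 ≤ b)
    (hbm : b ≤ m) (hab : 3 ≤ a+b) : 2*(m-1)*(a*b) ≤ m^2*(a+b-2) := by
  zify [show 2 ≤ a+b by omega, show 1 ≤ m by omega]
  have hm' : (2:ℤ) ≤ m := by exact_mod_cast hm
  have ham' : (a:ℤ) ≤ m := by exact_mod_cast ham
  have hbm' : (b:ℤ) ≤ m := by exact_mod_cast hbm
  have ha' : (1:ℤ) ≤ a := by exact_mod_cast ha
  have hb' : (1:ℤ) ≤ b := by exact_mod_cast hb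
  rcases le_or_gt 2 b with h2 | h2
  · have h2' : (2:ℤ) ≤ b := by exact_mod_cast h2
    have h1 : (0:ℤ) ≤ ((m:ℤ)-a)*((b:ℤ)-2)*(((m:ℤ)-1)^2+1) := by
      apply mul_nonneg (mul_nonneg (by linarith) (by linarith)); positivity
    have h2'' : (0:ℤ) ≤ ((m:ℤ)-a)*((m:ℤ)-2)^2 :=
      mul_nonneg (by linarith) (sq_nonneg _)
    have h3 : (0:ℤ) ≤ ((a:ℤ)-1)*(m:ℤ)*((m:ℤ)-2)*((m:ℤ)-b) := by
      apply mul_nonneg (mul_nonneg (mul_nonneg (by linarith) (by linarith)) (by linarith))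
      linarith
    have hid : ((m:ℤ)-1)*((m:ℤ)^2*((a:ℤ)+(b:ℤ)-2) - 2*((m:ℤ)-1)*((a:ℤ)*(b:ℤ)))
        = ((m:ℤ)-a)*((b:ℤ)-2)*(((m:ℤ)-1)^2+1) + ((m:ℤ)-a)*((m:ℤ)-2)^2
          + ((a:ℤ)-1)*(m:ℤ)*((m:ℤ)-2)*((m:ℤ)-b) := by ring
    nlinarith [h1, h2'', h3, hid]
  · have hb1 : b = 1 := by omega
    subst hb1
    have ha2 : (2:ℤ) ≤ a := by exact_mod_cast (show 2 ≤ a by omega)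
    have h4 : (0:ℤ) ≤ ((a:ℤ)-2)*((m:ℤ)^2-2*(m:ℤ)+2) := by nlinarith [sq_nonneg ((m:ℤ)-1)]
    push_cast
    nlinarith [h4, sq_nonneg ((m:ℤ)-2)]

lemma aux_natB (m a b : ℕ) (hm : 2 ≤ m) (ha : 1 ≤ a) (ham : a ≤ m) (hb : 1 ≤ b)
    (hbm : b ≤ m) (hab : 3 ≤ a+b) :
    32*(m-1)^6*(a*b)^6*(a+b) ≤ m^13*(a+b-2)^6 ∧
    (32*(m-1)^6*(a*b)^6*(a+b) = m^13*(a+b-2)^6 ↔ a = m ∧ b = m) := by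
  have k1 := aux_key1 m a b hm ha ham hb hbm hab
  have k2 : (2*(m-1)*(a*b))^6 ≤ (m^2*(a+b-2))^6 := Nat.pow_le_pow_left k1 6
  have k2' : 64*(m-1)^6*(a*b)^6 ≤ m^12*(a+b-2)^6 := by
    calc 64*(m-1)^6*(a*b)^6 = (2*(m-1)*(a*b))^6 := by ring
      _ ≤ (m^2*(a+b-2))^6 := k2
      _ = m^12*(a+b-2)^6 := by ring
  have k3 : a + b ≤ 2*m := by omega
  rcases eq_or_lt_of_le k3 with heq | hlt
  · have ha' : a = m := by omega
    have hb' : b = m := by omega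
    have e1 : m + m - 2 = 2*(m-1) := by omega
    have hE : 32*(m-1)^6*(m*m)^6*(m+m) = m^13*(m+m-2)^6 := by
      rw [e1]; ring
    rw [ha', hb']
    exact ⟨hE.le, ⟨fun _ => ⟨rfl, rfl⟩, fun _ => hE⟩⟩
  · have hpos : 0 < m^12*(a+b-2)^6 := by
      apply Nat.mul_pos (Nat.pow_pos (by omega)) (Nat.pow_pos (by omega))
    have hs : 2*(32*(m-1)^6*(a*b)^6*(a+b)) < 2*(m^13*(a+b-2)^6) := by
      calc 2*(32*(m-1)^6*(a*b)^6*(a+b)) = (64*(m-1)^6*(a*b)^6)*(a+b) := by ring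
        _ ≤ (m^12*(a+b-2)^6)*(a+b) := Nat.mul_le_mul_right _ k2'
        _ < (m^12*(a+b-2)^6)*(2*m) := (Nat.mul_lt_mul_left hpos).mpr hlt
        _ = 2*(m^13*(a+b-2)^6) := by ring
    have hstrict : 32*(m-1)^6*(a*b)^6*(a+b) < m^13*(a+b-2)^6 := by omega
    exact ⟨hstrict.le, ⟨fun he => absurd he hstrict.ne, fun hc => by omega⟩⟩

lemma aux_realA (a b : ℕ) (ha : 1 ≤ a) (hb : 1 ≤ b) (hab : 3 ≤ a+b) :
    (1536/343 : ℝ) * (1 / Real.sqrt ((a:ℝ) + (b:ℝ))) ≤ ((a:ℝ)*(b:ℝ)/((a:ℝ)+(b:ℝ)-2))^3 ∧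
    ((1536/343 : ℝ) * (1 / Real.sqrt ((a:ℝ) + (b:ℝ))) = ((a:ℝ)*(b:ℝ)/((a:ℝ)+(b:ℝ)-2))^3 ↔
      (a = 1 ∧ b = 8) ∨ (a = 8 ∧ b = 1)) := by
  have hab' : (3:ℝ) ≤ (a:ℝ) + (b:ℝ) := by exact_mod_cast hab
  have hs : (0:ℝ) < (a:ℝ) + (b:ℝ) := by linarith
  have hc : (0:ℝ) < (a:ℝ) + (b:ℝ) - 2 := by linarith
  have hp : (0:ℝ) < (a:ℝ) * (b:ℝ) := by
    have ha' : (1:ℝ) ≤ (a:ℝ) := by exact_mod_cast ha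
    have hb' : (1:ℝ) ≤ (b:ℝ) := by exact_mod_cast hb
    nlinarith
  have hsq : (0:ℝ) < Real.sqrt ((a:ℝ) + (b:ℝ)) := Real.sqrt_pos.mpr hs
  set X : ℝ := (1536/343 : ℝ) * (1 / Real.sqrt ((a:ℝ) + (b:ℝ))) with hX
  set Y : ℝ := ((a:ℝ)*(b:ℝ)/((a:ℝ)+(b:ℝ)-2))^3 with hY
  have hx0 : 0 ≤ X := by positivity
  have hy0 : 0 ≤ Y := by positivity
  set M : ℝ := 117649 * (((a:ℝ)+(b:ℝ)) * (((a:ℝ)+(b:ℝ)-2)^6)) with hM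
  have hM0 : 0 < M := by positivity
  have hsq2 : Real.sqrt ((a:ℝ) + (b:ℝ)) ^ 2 = (a:ℝ) + (b:ℝ) := Real.sq_sqrt hs.le
  have hkey : X^2 * M = 2359296 * ((a:ℝ)+(b:ℝ)-2)^6 := by
    rw [hX, hM, mul_pow, div_pow, div_pow, one_pow, hsq2]
    field_simp
    ring
  have hkey2 : Y^2 * M = 117649 * ((a:ℝ)*(b:ℝ))^6 * ((a:ℝ)+(b:ℝ)) := by
    rw [hY, hM, ← pow_mul]
    have hc6 : ((a:ℝ)+(b:ℝ)-2)^(3*2) ≠ 0 := by positivity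
    rw [div_pow, div_mul_eq_mul_div, div_eq_iff hc6]
    ring
  have hcast : ((a:ℝ)+(b:ℝ)-2) = ((a+b-2 : ℕ) : ℝ) := by
    rw [Nat.cast_sub (by omega)]
    push_cast; ring
  have hiff_le : X ≤ Y ↔ 2359296*(a+b-2)^6 ≤ 117649*(a*b)^6*(a+b) := by
    rw [← pow_le_pow_iff_left₀ hx0 hy0 (two_ne_zero), ← mul_le_mul_iff_of_pos_right hM0, hkey, hkey2, hcast]
    constructor
    · intro h; exact_mod_cast h
    · intro h; exact_mod_cast h
  have hiff_eq : X = Y ↔ 2359296*(a+b-2)^6 = 117649*(a*b)^6*(a+b) := by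
    constructor
    · intro h
      have h2 : X^2*M = Y^2*M := by rw [h]
      rw [hkey, hkey2, hcast] at h2
      exact_mod_cast h2
    · intro h
      have h2 : X^2*M = Y^2*M := by
        rw [hkey, hkey2, hcast]; exact_mod_cast h
      have h3 : X^2 = Y^2 := mul_right_cancel₀ hM0.ne' h2
      calc X = Real.sqrt (X^2) := (Real.sqrt_sq hx0).symm
        _ = Real.sqrt (Y^2) := by rw [h3]
        _ = Y := Real.sqrt_sq hy0
  have hN := aux_natA a b ha hb hab
  exact ⟨hiff_le.mpr hN.1, hiff_eq.trans hN.2⟩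

lemma aux_realB (m a b : ℕ) (hm : 2 ≤ m) (ha : 1 ≤ a) (ham : a ≤ m) (hb : 1 ≤ b)
    (hbm : b ≤ m) (hab : 3 ≤ a+b) :
    ((a:ℝ)*(b:ℝ)/((a:ℝ)+(b:ℝ)-2))^3 ≤
      Real.sqrt ((m:ℝ)^13) / (Real.sqrt 32 * ((m:ℝ)-1)^3) * (1 / Real.sqrt ((a:ℝ) + (b:ℝ))) ∧
    (((a:ℝ)*(b:ℝ)/((a:ℝ)+(b:ℝ)-2))^3 =
      Real.sqrt ((m:ℝ)^13) / (Real.sqrt 32 * ((m:ℝ)-1)^3) * (1 / Real.sqrt ((a:ℝ) + (b:ℝ))) ↔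
      a = m ∧ b = m) := by
  have hab' : (3:ℝ) ≤ (a:ℝ) + (b:ℝ) := by exact_mod_cast hab
  have hm' : (2:ℝ) ≤ (m:ℝ) := by exact_mod_cast hm
  have hs : (0:ℝ) < (a:ℝ) + (b:ℝ) := by linarith
  have hc : (0:ℝ) < (a:ℝ) + (b:ℝ) - 2 := by linarith
  have hm1 : (0:ℝ) < (m:ℝ) - 1 := by linarith
  have hp : (0:ℝ) < (a:ℝ) * (b:ℝ) := by
    have ha' : (1:ℝ) ≤ (a:ℝ) := by exact_mod_cast ha
    have hb' : (1:ℝ) ≤ (b:ℝ) := by exact_mod_cast hb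
    nlinarith
  have hsq : (0:ℝ) < Real.sqrt ((a:ℝ) + (b:ℝ)) := Real.sqrt_pos.mpr hs
  have hsq2 : Real.sqrt ((a:ℝ) + (b:ℝ)) ^ 2 = (a:ℝ) + (b:ℝ) := Real.sq_sqrt hs.le
  have h32 : Real.sqrt 32 ^ 2 = (32:ℝ) := Real.sq_sqrt (by norm_num)
  have hm13 : Real.sqrt ((m:ℝ)^13) ^ 2 = (m:ℝ)^13 := Real.sq_sqrt (by positivity)
  set Y : ℝ := ((a:ℝ)*(b:ℝ)/((a:ℝ)+(b:ℝ)-2))^3 with hY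
  set C : ℝ := Real.sqrt ((m:ℝ)^13) / (Real.sqrt 32 * ((m:ℝ)-1)^3) with hC
  set Z : ℝ := C * (1 / Real.sqrt ((a:ℝ) + (b:ℝ))) with hZ
  have hy0 : 0 ≤ Y := by positivity
  have hz0 : 0 ≤ Z := by positivity
  set M : ℝ := 32 * ((m:ℝ)-1)^6 * (((a:ℝ)+(b:ℝ)) * (((a:ℝ)+(b:ℝ)-2)^6)) with hM
  have hM0 : 0 < M := by positivity
  have hkey : Y^2 * M = 32*((m:ℝ)-1)^6 * ((a:ℝ)*(b:ℝ))^6 * ((a:ℝ)+(b:ℝ)) := by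
    rw [hY, hM, ← pow_mul]
    have hc6 : ((a:ℝ)+(b:ℝ)-2)^(3*2) ≠ 0 := by positivity
    rw [div_pow, div_mul_eq_mul_div, div_eq_iff hc6]
    ring
  have hkey2 : Z^2 * M = (m:ℝ)^13 * (((a:ℝ)+(b:ℝ)-2)^6) := by
    have hsqrt32 : (0:ℝ) < Real.sqrt 32 := Real.sqrt_pos.mpr (by norm_num)
    rw [hZ, hC, hM, mul_pow, div_pow, div_pow, one_pow, hsq2, mul_pow, h32, hm13]
    rw [← pow_mul]
    field_simp
  have hcast : ((a:ℝ)+(b:ℝ)-2) = ((a+b-2 : ℕ) : ℝ) := by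
    rw [Nat.cast_sub (by omega)]
    push_cast; ring
  have hcast2 : ((m:ℝ)-1) = ((m-1 : ℕ) : ℝ) := by
    rw [Nat.cast_sub (by omega)]
    push_cast; ring
  have hiff_le : Y ≤ Z ↔ 32*(m-1)^6*(a*b)^6*(a+b) ≤ m^13*(a+b-2)^6 := by
    rw [← pow_le_pow_iff_left₀ hy0 hz0 (two_ne_zero), ← mul_le_mul_iff_of_pos_right hM0, hkey, hkey2,
      hcast, hcast2]
    constructor
    · intro h; exact_mod_cast h
    · intro h; exact_mod_cast h
  have hiff_eq : Y = Z ↔ 32*(m-1)^6*(a*b)^6*(a+b) = m^13*(a+b-2)^6 := by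
    constructor
    · intro h
      have h2 : Y^2*M = Z^2*M := by rw [h]
      rw [hkey, hkey2, hcast, hcast2] at h2
      exact_mod_cast h2
    · intro h
      have h2 : Y^2*M = Z^2*M := by
        rw [hkey, hkey2, hcast, hcast2]; exact_mod_cast h
      have h3 : Y^2 = Z^2 := mul_right_cancel₀ hM0.ne' h2
      calc Y = Real.sqrt (Y^2) := (Real.sqrt_sq hy0).symm
        _ = Real.sqrt (Z^2) := by rw [h3]
        _ = Z := Real.sqrt_sq hz0
  have hN := aux_natB m a b hm ha ham hb hbm hab
  exact ⟨hiff_le.mpr hN.1, hiff_eq.trans hN.2⟩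

end AuxArith

section AuxGraph

lemma aux_walk_closed {V : Type*} (G : SimpleGraph V) (P : V → Prop)
    (hP : ∀ a b, G.Adj a b → P a → P b) {u w : V} (p : G.Walk u w) (hu : P u) : P w := by
  induction p with
  | nil => exact hu
  | cons h _ ih => exact ih (hP _ _ h hu)

lemma aux_reach_closed {V : Type*} (G : SimpleGraph V) (P : V → Prop)
    (hP : ∀ a b, G.Adj a b → P a → P b) {u w : V} (h : G.Reachable u w) (hu : P u) : P w := by
  obtain ⟨p⟩ := h
  exact aux_walk_closed G P hP p hu

lemma aux_degree_pos (G : SimpleGraph V) [DecidableRel G.Adj] (hG : G.Connected)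
    (hcard : 2 ≤ Fintype.card V) (v : V) : 0 < G.degree v := by
  rw [G.degree_pos_iff_exists_adj]
  by_contra hno
  push_neg at hno
  obtain ⟨w, hw⟩ := Fintype.exists_ne_of_one_lt_card (by omega) v
  have : w = v := by
    refine aux_reach_closed G (fun z => z = v) ?_ (hG.preconnected v w) rfl
    intro a b hab ha
    exact absurd (ha ▸ hab) (hno b)
  exact hw this

lemma aux_unique_nbr (G : SimpleGraph V) [DecidableRel G.Adj] {u v : V} (huv : G.Adj u v)
    (h1 : G.degree u = 1) : G.neighborFinset u = {v} := by
  apply (Finset.eq_of_subset_of_card_le ?_ ?_).symm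
  · intro x hx
    simp only [Finset.mem_singleton] at hx
    rw [hx]
    exact (G.mem_neighborFinset u v).mpr huv
  · rw [G.card_neighborFinset_eq_degree, h1, Finset.card_singleton]

lemma aux_deg_sum_three (G : SimpleGraph V) [DecidableRel G.Adj] (hG : G.Connected)
    (hcard : 3 ≤ Fintype.card V) {u v : V} (huv : G.Adj u v) :
    3 ≤ G.degree u + G.degree v := by
  have h2 : 2 ≤ Fintype.card V := by omega
  have hu1 : 0 < G.degree u := aux_degree_pos G hG h2 u
  have hv1 : 0 < G.degree v := aux_degree_pos G hG h2 v
  by_contra hlt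
  have hu : G.degree u = 1 := by omega
  have hv : G.degree v = 1 := by omega
  have hNu : G.neighborFinset u = {v} := aux_unique_nbr G huv hu
  have hNv : G.neighborFinset v = {u} := aux_unique_nbr G huv.symm hv
  have hall : ∀ z : V, z = u ∨ z = v := by
    intro z
    refine aux_reach_closed G (fun z => z = u ∨ z = v) ?_ (hG.preconnected u z) (Or.inl rfl)
    rintro a b hab (rfl | rfl)
    · right
      have : b ∈ G.neighborFinset a := (G.mem_neighborFinset a b).mpr hab
      rw [hNu] at this
      simpa using this
    · left
      have : b ∈ G.neighborFinset a := (G.mem_neighborFinset a b).mpr hab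
      rw [hNv] at this
      simpa using this
  have : Fintype.card V ≤ 2 := by
    have hsub : (Finset.univ : Finset V) ⊆ {u, v} := by
      intro z _
      rcases hall z with rfl | rfl <;> simp
    calc Fintype.card V = (Finset.univ : Finset V).card := rfl
      _ ≤ ({u, v} : Finset V).card := Finset.card_le_card hsub
      _ ≤ 2 := Finset.card_insert_le _ _ |>.trans (by simp)
  omega

lemma aux_complete_iso (G : SimpleGraph V) {n : ℕ} (hn : Fintype.card V = n)
    (hadj : ∀ a b : V, a ≠ b → G.Adj a b) : Nonempty (G ≃g completeGraph (Fin n)) := by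
  let e := Fintype.equivFinOfCardEq hn
  refine ⟨⟨e, ?_⟩⟩
  intro a b
  simp only [completeGraph, top_adj, ne_eq, EmbeddingLike.apply_eq_iff_eq]
  constructor
  · intro h; exact hadj a b h
  · intro h; exact G.ne_of_adj h

lemma aux_star_iso (G : SimpleGraph V) (u : V) (hcard : Fintype.card V = 9)
    (hadj : ∀ a b : V, G.Adj a b ↔ (a = u ∧ b ≠ u) ∨ (b = u ∧ a ≠ u)) :
    Nonempty (G ≃g completeBipartiteGraph (Fin 1) (Fin 8)) := by
  have hc8 : (Finset.univ.erase u).card = 8 := by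
    rw [Finset.card_erase_of_mem (Finset.mem_univ u), Finset.card_univ, hcard]
  let e₀ := Finset.equivFinOfCardEq hc8
  have hmem : ∀ z : V, z ≠ u → z ∈ Finset.univ.erase u := by
    intro z hz; exact Finset.mem_erase.mpr ⟨hz, Finset.mem_univ z⟩
  have hne : ∀ i : Fin 8, ((e₀.symm i : { x // x ∈ Finset.univ.erase u }) : V) ≠ u := by
    intro i
    have := (e₀.symm i).2
    exact (Finset.mem_erase.mp this).1
  let f : V ≃ (Fin 1 ⊕ Fin 8) :=
    { toFun := fun z => if h : z = u then Sum.inl 0 else Sum.inr (e₀ ⟨z, hmem z h⟩)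
      invFun := fun x => Sum.elim (fun _ => u) (fun i => ((e₀.symm i : _) : V)) x
      left_inv := by
        intro z
        by_cases h : z = u
        · simp [h]
        · simp only [dif_neg h, Sum.elim_inr, Equiv.symm_apply_apply]
      right_inv := by
        rintro (i | i)
        · simp only [Sum.elim_inl]
          refine (dif_pos rfl).trans ?_
          exact congrArg Sum.inl (Subsingleton.elim 0 i)
        · simp only [Sum.elim_inr]
          refine (dif_neg (hne i)).trans ?_
          congr 1
          rw [show (⟨((e₀.symm i : _) : V), hmem _ (hne i)⟩ :
            { x // x ∈ Finset.univ.erase u }) = e₀.symm i from Subtype.ext rfl]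
          exact e₀.apply_symm_apply i }
  refine ⟨⟨f, ?_⟩⟩
  intro a b
  by_cases ha : a = u <;> by_cases hb : b = u
  · subst ha; subst hb
    simp only [completeBipartiteGraph_adj]
    simp [f, hadj]
  · subst ha
    simp only [completeBipartiteGraph_adj]
    simp [f, dif_neg hb, hadj, hb]
  · subst hb
    simp only [completeBipartiteGraph_adj]
    simp [f, dif_neg ha, hadj, ha]
  · simp only [completeBipartiteGraph_adj]
    simp [f, dif_neg ha, dif_neg hb, hadj, ha, hb]

lemma aux_complete_char (G : SimpleGraph V) {n : ℕ} (f : G ≃g completeGraph (Fin n)) :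
    ∀ a b : V, G.Adj a b ↔ a ≠ b := by
  intro a b
  rw [← f.map_rel_iff]
  simp only [completeGraph, top_adj, ne_eq, EmbeddingLike.apply_eq_iff_eq]

lemma aux_star_char (G : SimpleGraph V) (f : G ≃g completeBipartiteGraph (Fin 1) (Fin 8)) :
    ∀ a b : V, G.Adj a b ↔
      (a = f.symm (Sum.inl 0) ∧ b ≠ f.symm (Sum.inl 0)) ∨
      (b = f.symm (Sum.inl 0) ∧ a ≠ f.symm (Sum.inl 0)) := by
  intro a b
  have key : ∀ z : V, z = f.symm (Sum.inl 0) ↔ ∃ i, f z = Sum.inl i := by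
    intro z
    constructor
    · rintro rfl
      exact ⟨0, f.apply_symm_apply _⟩
    · rintro ⟨i, hi⟩
      have : f z = Sum.inl 0 := by rw [hi]; congr; exact Subsingleton.elim _ _
      have := congrArg f.symm this
      rwa [f.symm_apply_apply] at this
  rw [← f.map_rel_iff, completeBipartiteGraph_adj]
  have fin1 : ∀ i : Fin 1, i = 0 := fun i => Subsingleton.elim _ _
  rcases ha : f a with i | i <;> rcases hb : f b with j | j <;>
    simp [key, ha, hb, fin1]

end AuxGraph

/-- Auxiliary: the summand of the sum-connectivity index. -/
noncomputable def auxLiftX (G : SimpleGraph V) [DecidableRel G.Adj] : Sym2 V → ℝ :=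
  Sym2.lift
    ⟨fun u v => 1 / Real.sqrt ((G.degree u : ℝ) + (G.degree v : ℝ)),
     fun u v => by dsimp only; rw [add_comm ((G.degree u : ℝ)) ((G.degree v : ℝ))]⟩

/-- Auxiliary: the summand of the augmented Zagreb index. -/
noncomputable def auxLiftA (G : SimpleGraph V) [DecidableRel G.Adj] : Sym2 V → ℝ :=
  Sym2.lift
    ⟨fun u v => ((G.degree u : ℝ) * (G.degree v : ℝ) /
        ((G.degree u : ℝ) + (G.degree v : ℝ) - 2)) ^ 3,
     fun u v => by dsimp only; rw [mul_comm ((G.degree u : ℝ)) ((G.degree v : ℝ)),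
        add_comm ((G.degree u : ℝ)) ((G.degree v : ℝ))]⟩

lemma auxSumConn_eq (G : SimpleGraph V) [DecidableRel G.Adj] :
    sumConnIndex G = ∑ e ∈ G.edgeFinset, auxLiftX G e := rfl

lemma auxAugZagreb_eq (G : SimpleGraph V) [DecidableRel G.Adj] :
    augZagrebIndex G = ∑ e ∈ G.edgeFinset, auxLiftA G e := rfl

lemma auxLiftX_mk (G : SimpleGraph V) [DecidableRel G.Adj] (u v : V) :
    auxLiftX G s(u, v) = 1 / Real.sqrt ((G.degree u : ℝ) + (G.degree v : ℝ)) := rfl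

lemma auxLiftA_mk (G : SimpleGraph V) [DecidableRel G.Adj] (u v : V) :
    auxLiftA G s(u, v) = ((G.degree u : ℝ) * (G.degree v : ℝ) /
      ((G.degree u : ℝ) + (G.degree v : ℝ) - 2)) ^ 3 := rfl


variable (G : SimpleGraph V) [DecidableRel G.Adj]

theorem stmt15 (hG : G.Connected) (n : ℕ) (hn : Fintype.card V = n) (hn3 : 3 ≤ n) :
    (1536 / 343 : ℝ) * sumConnIndex G ≤ augZagrebIndex G ∧
    augZagrebIndex G ≤
      Real.sqrt (((n : ℝ) - 1) ^ 13) / (Real.sqrt 32 * ((n : ℝ) - 2) ^ 3) * sumConnIndex G ∧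
    ((1536 / 343 : ℝ) * sumConnIndex G = augZagrebIndex G ↔
      Nonempty (G ≃g completeBipartiteGraph (Fin 1) (Fin 8))) ∧
    (augZagrebIndex G =
        Real.sqrt (((n : ℝ) - 1) ^ 13) / (Real.sqrt 32 * ((n : ℝ) - 2) ^ 3) * sumConnIndex G ↔
      Nonempty (G ≃g completeGraph (Fin n))) := by
  have hcard3 : 3 ≤ Fintype.card V := by omega
  have hc2 : 2 ≤ Fintype.card V := by omega
  have hdpos : ∀ v : V, 1 ≤ G.degree v := fun v => aux_degree_pos G hG hc2 v
  have hdle : ∀ v : V, G.degree v ≤ n - 1 := by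
    intro v
    have := G.degree_lt_card_verts v
    omega
  set m : ℕ := n - 1 with hmdef
  have hm2 : 2 ≤ m := by omega
  have h1m : ((m : ℕ) : ℝ) = (n:ℝ) - 1 := by
    rw [hmdef, Nat.cast_sub (by omega), Nat.cast_one]
  have h2m : ((m : ℕ) : ℝ) - 1 = (n:ℝ) - 2 := by rw [h1m]; ring
  have hCrw : Real.sqrt (((n : ℝ) - 1) ^ 13) / (Real.sqrt 32 * ((n : ℝ) - 2) ^ 3)
      = Real.sqrt (((m:ℕ):ℝ)^13) / (Real.sqrt 32 * (((m:ℕ):ℝ)-1)^3) := by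
    rw [← h2m, ← h1m]
  have hle1 : ∀ e ∈ G.edgeFinset, (1536/343 : ℝ) * auxLiftX G e ≤ auxLiftA G e := by
    intro e
    induction e using Sym2.ind with
    | _ a b =>
      intro he
      rw [mem_edgeFinset, mem_edgeSet] at he
      rw [auxLiftX_mk, auxLiftA_mk]
      exact (aux_realA _ _ (hdpos a) (hdpos b) (aux_deg_sum_three G hG hcard3 he)).1
  have hle2 : ∀ e ∈ G.edgeFinset,
      auxLiftA G e ≤ Real.sqrt (((m:ℕ):ℝ)^13) / (Real.sqrt 32 * (((m:ℕ):ℝ)-1)^3) * auxLiftX G e := by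
    intro e
    induction e using Sym2.ind with
    | _ a b =>
      intro he
      rw [mem_edgeFinset, mem_edgeSet] at he
      rw [auxLiftX_mk, auxLiftA_mk]
      exact (aux_realB m _ _ hm2 (hdpos a) (hdle a) (hdpos b) (hdle b)
        (aux_deg_sum_three G hG hcard3 he)).1
  have hiff_low : (1536 / 343 : ℝ) * sumConnIndex G = augZagrebIndex G ↔
      ∀ e ∈ G.edgeFinset, (1536/343 : ℝ) * auxLiftX G e = auxLiftA G e := by
    rw [auxSumConn_eq, auxAugZagreb_eq, Finset.mul_sum]
    exact Finset.sum_eq_sum_iff_of_le hle1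
  have hiff_high : augZagrebIndex G =
      Real.sqrt (((m:ℕ):ℝ)^13) / (Real.sqrt 32 * (((m:ℕ):ℝ)-1)^3) * sumConnIndex G ↔
      ∀ e ∈ G.edgeFinset, auxLiftA G e =
        Real.sqrt (((m:ℕ):ℝ)^13) / (Real.sqrt 32 * (((m:ℕ):ℝ)-1)^3) * auxLiftX G e := by
    rw [auxSumConn_eq, auxAugZagreb_eq, Finset.mul_sum]
    exact Finset.sum_eq_sum_iff_of_le hle2
  refine ⟨?_, ?_, ?_, ?_⟩
  · -- lower bound
    rw [auxSumConn_eq, auxAugZagreb_eq, Finset.mul_sum]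
    exact Finset.sum_le_sum hle1
  · -- upper bound
    rw [hCrw, auxSumConn_eq, auxAugZagreb_eq, Finset.mul_sum]
    exact Finset.sum_le_sum hle2
  · -- equality iff star
    rw [hiff_low]
    constructor
    · intro hall
      have hdeg18 : ∀ a b : V, G.Adj a b →
          (G.degree a = 1 ∧ G.degree b = 8) ∨ (G.degree a = 8 ∧ G.degree b = 1) := by
        intro a b hab
        have he : s(a, b) ∈ G.edgeFinset := by rw [mem_edgeFinset, mem_edgeSet]; exact hab
        have := hall _ he
        rw [auxLiftX_mk, auxLiftA_mk] at this
        exact ((aux_realA _ _ (hdpos a) (hdpos b) (aux_deg_sum_three G hG hcard3 hab)).2).mp this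
      obtain ⟨v0⟩ : Nonempty V := Fintype.card_pos_iff.mp (by omega)
      obtain ⟨w0, hw0⟩ := (G.degree_pos_iff_exists_adj v0).mp (hdpos v0)
      obtain ⟨u, hu8⟩ : ∃ u : V, G.degree u = 8 := by
        rcases hdeg18 v0 w0 hw0 with ⟨h1, h8⟩ | ⟨h8, h1⟩
        exacts [⟨w0, h8⟩, ⟨v0, h8⟩]
      have hleaf : ∀ w, G.Adj u w → G.degree w = 1 := by
        intro w hw
        rcases hdeg18 u w hw with ⟨h1, -⟩ | ⟨-, h1⟩
        · omega
        · exact h1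
      have hP : ∀ z : V, z = u ∨ G.Adj u z := by
        intro z
        refine aux_reach_closed G (fun z => z = u ∨ G.Adj u z) ?_ (hG.preconnected u z)
          (Or.inl rfl)
        rintro a b hab (rfl | hua)
        · exact Or.inr hab
        · have h1 : G.degree a = 1 := hleaf a hua
          have hNa : G.neighborFinset a = {u} := aux_unique_nbr G hua.symm h1
          have hbmem : b ∈ G.neighborFinset a := (G.mem_neighborFinset a b).mpr hab
          rw [hNa] at hbmem
          exact Or.inl (by simpa using hbmem)
      have hadjchar : ∀ a b : V, G.Adj a b ↔ (a = u ∧ b ≠ u) ∨ (b = u ∧ a ≠ u) := by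
        intro a b
        constructor
        · intro hab
          rcases hP a with rfl | hua
          · exact Or.inl ⟨rfl, (G.ne_of_adj hab).symm⟩
          · have h1 : G.degree a = 1 := hleaf a hua
            have hNa : G.neighborFinset a = {u} := aux_unique_nbr G hua.symm h1
            have hbmem : b ∈ G.neighborFinset a := (G.mem_neighborFinset a b).mpr hab
            rw [hNa] at hbmem
            exact Or.inr ⟨by simpa using hbmem, (G.ne_of_adj hua).symm⟩
        · rintro (⟨rfl, hb⟩ | ⟨rfl, ha2⟩)
          · rcases hP b with rfl | h
            · exact absurd rfl hb
            · exact h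
          · rcases hP a with rfl | h
            · exact absurd rfl ha2
            · exact h.symm
      have hcard9 : Fintype.card V = 9 := by
        have huniv : (Finset.univ : Finset V) = insert u (G.neighborFinset u) := by
          ext z
          simp only [Finset.mem_univ, true_iff, Finset.mem_insert, G.mem_neighborFinset]
          exact hP z
        have hnotmem : u ∉ G.neighborFinset u := by simp
        calc Fintype.card V = (insert u (G.neighborFinset u)).card := by rw [← huniv]; rfl
          _ = (G.neighborFinset u).card + 1 := Finset.card_insert_of_notMem hnotmem
          _ = 9 := by rw [G.card_neighborFinset_eq_degree, hu8]
      exact aux_star_iso G u hcard9 hadjchar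
    · rintro ⟨f⟩
      have hchar := aux_star_char G f
      set u := f.symm (Sum.inl 0) with hu
      have hcard9 : Fintype.card V = 9 := by
        have := Fintype.card_congr f.toEquiv
        simpa using this
      have hNu : G.neighborFinset u = Finset.univ.erase u := by
        ext z
        simp only [G.mem_neighborFinset, Finset.mem_erase, Finset.mem_univ, and_true]
        rw [hchar u z]
        constructor
        · rintro (⟨-, h⟩ | ⟨h, hh⟩)
          · exact h
          · exact absurd rfl hh
        · intro h
          exact Or.inl ⟨rfl, h⟩
      have hdu : G.degree u = 8 := by
        rw [← G.card_neighborFinset_eq_degree, hNu,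
          Finset.card_erase_of_mem (Finset.mem_univ u), Finset.card_univ, hcard9]
      have hdw : ∀ w : V, w ≠ u → G.degree w = 1 := by
        intro w hw
        have hNw : G.neighborFinset w = {u} := by
          ext z
          simp only [G.mem_neighborFinset, Finset.mem_singleton]
          rw [hchar w z]
          constructor
          · rintro (⟨h, -⟩ | ⟨h, -⟩)
            · exact absurd h hw
            · exact h
          · intro h
            exact Or.inr ⟨h, hw⟩
        rw [← G.card_neighborFinset_eq_degree, hNw, Finset.card_singleton]
      intro e he
      induction e using Sym2.ind with
      | _ a b =>
        have hab : G.Adj a b := by rwa [mem_edgeFinset, mem_edgeSet] at he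
        rw [auxLiftX_mk, auxLiftA_mk]
        apply ((aux_realA _ _ (hdpos a) (hdpos b) (aux_deg_sum_three G hG hcard3 hab)).2).mpr
        rcases (hchar a b).mp hab with ⟨ha, hb⟩ | ⟨hb, ha⟩
        · exact Or.inr ⟨by rw [ha]; exact hdu, hdw b hb⟩
        · exact Or.inl ⟨hdw a ha, by rw [hb]; exact hdu⟩
  · -- equality iff complete
    rw [hCrw, hiff_high]
    constructor
    · intro hall
      have hdegall : ∀ a b : V, G.Adj a b → G.degree a = m ∧ G.degree b = m := by
        intro a b hab
        have he : s(a, b) ∈ G.edgeFinset := by rw [mem_edgeFinset, mem_edgeSet]; exact hab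
        have := hall _ he
        rw [auxLiftX_mk, auxLiftA_mk] at this
        exact ((aux_realB m _ _ hm2 (hdpos a) (hdle a) (hdpos b) (hdle b)
          (aux_deg_sum_three G hG hcard3 hab)).2).mp this
      have hdeg : ∀ v : V, G.degree v = m := by
        intro v
        obtain ⟨w, hw⟩ := (G.degree_pos_iff_exists_adj v).mp (hdpos v)
        exact (hdegall v w hw).1
      have hadj : ∀ a b : V, a ≠ b → G.Adj a b := by
        intro a b hab
        have hsub : G.neighborFinset a ⊆ Finset.univ.erase a := by
          intro x hx
          exact Finset.mem_erase.mpr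
            ⟨(G.ne_of_adj ((G.mem_neighborFinset a x).mp hx)).symm, Finset.mem_univ x⟩
        have hNa : G.neighborFinset a = Finset.univ.erase a := by
          apply Finset.eq_of_subset_of_card_le hsub
          rw [Finset.card_erase_of_mem (Finset.mem_univ a), Finset.card_univ, hn,
            G.card_neighborFinset_eq_degree, hdeg]
        have hbmem : b ∈ G.neighborFinset a := by
          rw [hNa]
          exact Finset.mem_erase.mpr ⟨hab.symm, Finset.mem_univ b⟩
        exact (G.mem_neighborFinset a b).mp hbmem
      exact aux_complete_iso G hn hadj
    · rintro ⟨f⟩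
      have hchar := aux_complete_char G f
      have hdeg : ∀ v : V, G.degree v = m := by
        intro v
        have hNv : G.neighborFinset v = Finset.univ.erase v := by
          ext z
          simp only [G.mem_neighborFinset, Finset.mem_erase, Finset.mem_univ, and_true]
          rw [hchar v z]
          exact ⟨fun h => h.symm, fun h => h.symm⟩
        rw [← G.card_neighborFinset_eq_degree, hNv,
          Finset.card_erase_of_mem (Finset.mem_univ v), Finset.card_univ, hn]
      intro e he
      induction e using Sym2.ind with
      | _ a b =>
        have hab : G.Adj a b := by rwa [mem_edgeFinset, mem_edgeSet] at he
        rw [auxLiftX_mk, auxLiftA_mk]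
        apply ((aux_realB m _ _ hm2 (hdpos a) (hdle a) (hdpos b) (hdle b)
          (aux_deg_sum_three G hG hcard3 hab)).2).mpr
        exact ⟨hdeg a, hdeg b⟩
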